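/- Let d ≥ 1 be an integer and let c, ε : ℤ/dℤ → ℤ be functions such that the sum of c(j) over all j ∈ ℤ/dℤ is ≤ 0. Then there exists a function x : ℤ/dℤ → ℤ satisfying x(j) ≥ ε(j) and x(j) ≥ x(j−1) + c(j) for every j ∈ ℤ/dℤ. -/

import Mathlib

lemma sum_zmod_range (d : ℕ) [NeZero d] (f : ZMod d → ℤ) :
    ∑ t ∈ Finset.range d, f (t : ZMod d) = ∑ i : ZMod d, f i := by
  refine Finset.sum_nbij' (fun t => ((t : ZMod d))) (fun i => i.val) ?_ ?_ ?_ ?_ ?_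
  · intro a _; exact Finset.mem_univ _
  · intro a _; exact Finset.mem_range.mpr (ZMod.val_lt a)
  · intro a ha; exact ZMod.val_natCast_of_lt (Finset.mem_range.mp ha)
  · intro a _; exact ZMod.natCast_zmod_val a
  · intro a _; rfl

/-- For `d ≥ 1` and functions `c, ε : ℤ/dℤ → ℤ` with `∑ c ≤ 0`, there is a function
`x : ℤ/dℤ → ℤ` with `x j ≥ ε j` and `x j ≥ x (j-1) + c j` for all `j`. -/
theorem statement5 (d : ℕ) [NeZero d] (c ε : ZMod d → ℤ)
    (hc : ∑ j : ZMod d, c j ≤ 0) :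
    ∃ x : ZMod d → ℤ, ∀ j : ZMod d, ε j ≤ x j ∧ x (j - 1) + c j ≤ x j := by
  have hd : 0 < d := Nat.pos_of_ne_zero (NeZero.ne d)
  have hne : (Finset.range d).Nonempty := Finset.nonempty_range_iff.mpr (NeZero.ne d)
  set f : ZMod d → ℕ → ℤ :=
    fun j i => ε (j - (i : ZMod d)) + ∑ t ∈ Finset.range i, c (j - (t : ZMod d)) with hf
  have hstep : ∀ (j : ZMod d) (i : ℕ), f (j - 1) i + c j = f j (i + 1) := by
    intro j i
    simp only [hf]
    rw [Finset.sum_range_succ']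
    have e1 : j - 1 - (i : ZMod d) = j - ((i + 1 : ℕ) : ZMod d) := by push_cast; ring
    have e2 : ∑ t ∈ Finset.range i, c (j - 1 - (t : ZMod d))
        = ∑ t ∈ Finset.range i, c (j - ((t + 1 : ℕ) : ZMod d)) := by
      refine Finset.sum_congr rfl fun t _ => ?_
      congr 1; push_cast; ring
    rw [e1, e2]
    have e3 : j - ((0 : ℕ) : ZMod d) = j := by push_cast; ring
    rw [e3]; ring
  refine ⟨fun j => (Finset.range d).sup' hne (f j), fun j => ?_⟩
  constructor
  · have := Finset.le_sup' (f j) (Finset.mem_range.mpr hd : 0 ∈ Finset.range d)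
    simpa [hf, -Finset.le_sup'_iff] using this
  · rw [Finset.sup'_add]
    apply Finset.sup'_le
    intro i hi
    rw [hstep]
    rcases Nat.lt_or_ge (i + 1) d with h | h
    · exact Finset.le_sup' (f j) (Finset.mem_range.mpr h)
    · have h1 : i + 1 = d := by have := Finset.mem_range.mp hi; omega
      have h2 : f j (i + 1) ≤ ε j := by
        simp only [hf]
        have e4 : j - ((i + 1 : ℕ) : ZMod d) = j := by
          rw [h1, ZMod.natCast_self]; ring
        rw [e4, h1]
        have h4 : ∑ t ∈ Finset.range d, c (j - (t : ZMod d)) = ∑ i : ZMod d, c i := by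
          rw [sum_zmod_range d (fun t => c (j - t))]
          exact Fintype.sum_equiv (Equiv.subLeft j) _ _ (fun i => rfl)
        rw [h4]; linarith
      refine le_trans h2 ?_
      have := Finset.le_sup' (f j) (Finset.mem_range.mpr hd : 0 ∈ Finset.range d)
      simpa [hf, -Finset.le_sup'_iff] using this
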